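/- Let G be a group and A a (ℤ × G)-graded ring with support in ℕ × G. Let A_{(0,−)} = ⊕_{g∈G} A_{(0,g)}, a graded subring, and let P be a finitely generated (ℤ × G)-graded projective right A-module. Then P is isomorphic as a graded A-module to (P/P·A₊) ⊗_{A_{(0,−)}} A, and componentwise P_{(ω,g)} ≅ ⊕_{κ≤ω, h∈G} T(P)_{(κ,h)} ⊗ A_{(ω−κ, g−h)} where T(P) = P/P·A₊. -/

import Mathlib

universe u

/-- The submodule `M·A₊` (for left modules: `A₊·M`) where `A₊ = ⊕_{n>0, g} A_{(n,g)}`. -/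
def posSMulSubmoduleZG {A : Type u} [Ring A] {G : Type u} [AddGroup G]
    (𝒜 : ℤ × G → AddSubgroup A)
    (M : Type u) [AddCommGroup M] [Module A M] : Submodule A M :=
  Submodule.span A {x : M | ∃ n : ℤ, 0 < n ∧ ∃ g : G, ∃ a ∈ 𝒜 (n, g), ∃ m : M, x = a • m}

/-- Universal property of `Q ⊗_{A₀} A` (for left modules, `A ⊗_{A₀} Q`). -/
def IsBaseChangeAlong (A : Type u) [Ring A] (A₀ : Subring A)
    (Q : Type u) [AddCommGroup Q] [Module A₀ Q]
    (E : Type u) [AddCommGroup E] [Module A E] (ι : Q →ₗ[A₀] E) : Prop :=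
  ∀ (N : Type u) [AddCommGroup N] [Module A N] (f : Q →ₗ[A₀] N),
    ∃! F : E →ₗ[A] N, ∀ q : Q, F (ι q) = f q


open DirectSum

set_option linter.unusedSectionVars false
section Aux

variable {A : Type u} [Ring A] {G : Type u} [AddGroup G] [DecidableEq G]
  (𝒜 : ℤ × G → AddSubgroup A) [GradedRing 𝒜]

variable {M : Type u} [AddCommGroup M] [Module A M] (ℳ : ℤ × G → AddSubgroup M)
  [DirectSum.Decomposition ℳ] [SetLike.GradedSMul 𝒜 ℳ]

/-- The homogeneous projection as an additive monoid hom. -/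
noncomputable def prHom (d : ℤ × G) : M →+ M :=
  ((ℳ d).subtype).comp ((DFinsupp.evalAddMonoidHom d).comp
    (DirectSum.decomposeAddEquiv ℳ).toAddMonoidHom)

lemma prHom_apply (d : ℤ × G) (x : M) :
    prHom ℳ d x = (DirectSum.decompose ℳ x d : M) := by
  simp [prHom, DFinsupp.evalAddMonoidHom, DirectSum.decomposeAddEquiv_apply]

lemma prHom_mem (d : ℤ × G) (x : M) : prHom ℳ d x ∈ ℳ d := by
  rw [prHom_apply]; exact SetLike.coe_mem _

lemma prHom_of_mem_same {d : ℤ × G} {x : M} (hx : x ∈ ℳ d) : prHom ℳ d x = x := by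
  rw [prHom_apply]; exact DirectSum.decompose_of_mem_same ℳ hx

lemma prHom_of_mem_ne {d e : ℤ × G} {x : M} (hx : x ∈ ℳ e) (hne : e ≠ d) :
    prHom ℳ d x = 0 := by
  rw [prHom_apply]; exact DirectSum.decompose_of_mem_ne ℳ hx hne

lemma prHom_sum (x : M) [∀ (i : ℤ × G) (y : ↥(ℳ i)), Decidable (y ≠ 0)] :
    ∑ d ∈ DFinsupp.support (DirectSum.decompose ℳ x), prHom ℳ d x = x := by
  simp only [prHom_apply]
  exact DirectSum.sum_support_decompose ℳ x

lemma prHom_smul {δ : ℤ × G} {a : A} (ha : a ∈ 𝒜 δ) (d : ℤ × G) (x : M) :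
    prHom ℳ (δ + d) (a • x) = a • prHom ℳ d x := by
  induction x using DirectSum.Decomposition.inductionOn ℳ with
  | zero => simp
  | @homogeneous e m =>
      have hm : (m : M) ∈ ℳ e := m.2
      have hsm : a • (m : M) ∈ ℳ (δ + e) := SetLike.GradedSMul.smul_mem ha hm
      by_cases h : e = d
      · subst h
        rw [prHom_of_mem_same ℳ hsm, prHom_of_mem_same ℳ hm]
      · rw [prHom_of_mem_ne ℳ hsm (by
          intro hc; exact h (by
            have := congrArg (fun z => z - δ) hc
            simpa using this)), prHom_of_mem_ne ℳ hm h, smul_zero]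
  | add x y hx hy => rw [smul_add, map_add, hx, hy, map_add, smul_add]

lemma prHom_smul' {δ : ℤ × G} {a : A} (ha : a ∈ 𝒜 δ) (d : ℤ × G) (x : M) :
    prHom ℳ d (a • x) = a • prHom ℳ (-δ + d) x := by
  have := prHom_smul 𝒜 ℳ ha (-δ + d) x
  rw [add_neg_cancel_left] at this
  exact this

/-- decompose a scalar action into homogeneous pieces. -/
lemma prHom_smul_sum [∀ (i : ℤ × G) (y : ↥(𝒜 i)), Decidable (y ≠ 0)]
    (a : A) (x : M) (d : ℤ × G) :
    prHom ℳ d (a • x) =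
      ∑ δ ∈ DFinsupp.support (DirectSum.decompose 𝒜 a),
        prHom 𝒜 δ a • prHom ℳ (-δ + d) x := by
  conv_lhs => rw [← prHom_sum 𝒜 a, Finset.sum_smul, map_sum]
  refine Finset.sum_congr rfl fun δ _ => ?_
  exact prHom_smul' 𝒜 ℳ (prHom_mem 𝒜 δ a) d x

section Ring

/-- Degree-zero (in the `ℤ` coordinate) part of a ring element. -/
noncomputable def pi0 : A →+ A :=
  (DFinsupp.sumAddHom fun d : ℤ × G => if d.1 = 0 then (𝒜 d).subtype else 0).comp
    (DirectSum.decomposeAddEquiv 𝒜).toAddMonoidHom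

lemma pi0_of_mem {d : ℤ × G} {b : A} (hb : b ∈ 𝒜 d) :
    pi0 𝒜 b = if d.1 = 0 then b else 0 := by
  have h1 : pi0 𝒜 b =
      (DFinsupp.sumAddHom fun d : ℤ × G => if d.1 = 0 then (𝒜 d).subtype else 0)
        (DFinsupp.single d ⟨b, hb⟩) := by
    have h0 : pi0 𝒜 b =
        (DFinsupp.sumAddHom fun d : ℤ × G => if d.1 = 0 then (𝒜 d).subtype else 0)
          (DirectSum.decompose 𝒜 b) := rfl
    rw [h0, DirectSum.decompose_of_mem 𝒜 hb]
    rfl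
  rw [h1, DFinsupp.sumAddHom_single]
  by_cases h : d.1 = 0 <;> simp [h]

lemma pi0_sum_eq (b : A) [∀ (i : ℤ × G) (y : ↥(𝒜 i)), Decidable (y ≠ 0)] :
    pi0 𝒜 b = ∑ d ∈ DFinsupp.support (DirectSum.decompose 𝒜 b),
      (if d.1 = 0 then prHom 𝒜 d b else 0) := by
  rw [pi0]
  simp only [AddMonoidHom.comp_apply, AddMonoidHom.coe_coe,
    DirectSum.decomposeAddEquiv_apply, DFinsupp.sumAddHom_apply, DFinsupp.sum]
  refine Finset.sum_congr rfl fun d _ => ?_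
  by_cases h : d.1 = 0 <;> simp [h, prHom_apply] <;> rfl

lemma pi0_mem (A₀ : Subring A) (hA₀ : A₀.toAddSubgroup = ⨆ g : G, 𝒜 (0, g)) (b : A) :
    pi0 𝒜 b ∈ A₀ := by
  classical
  have : pi0 𝒜 b ∈ A₀.toAddSubgroup := by
    rw [hA₀, pi0_sum_eq]
    refine sum_mem fun d _ => ?_
    by_cases h : d.1 = 0
    · rw [if_pos h]
      have hd2 : d = (0, d.2) := Prod.ext h rfl
      refine (le_iSup (fun g : G => 𝒜 (0, g)) d.2) ?_
      rw [← hd2]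
      exact prHom_mem 𝒜 d b
    · rw [if_neg h]
      exact zero_mem _
  exact this

/-- The set of homogeneous elements of positive degree. -/
def posHomog : Set A := {a : A | ∃ n : ℤ, 0 < n ∧ ∃ g : G, a ∈ 𝒜 (n, g)}

lemma sub_pi0_mem (hsuppA : ∀ d : ℤ × G, d.1 < 0 → 𝒜 d = ⊥) (b : A) :
    b - pi0 𝒜 b ∈ AddSubgroup.closure (posHomog 𝒜) := by
  classical
  have key : b - pi0 𝒜 b = ∑ d ∈ DFinsupp.support (DirectSum.decompose 𝒜 b),
      (prHom 𝒜 d b - if d.1 = 0 then prHom 𝒜 d b else 0) := by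
    rw [Finset.sum_sub_distrib, ← pi0_sum_eq]
    congr 1
    exact (prHom_sum 𝒜 b).symm
  rw [key]
  refine sum_mem fun d _ => ?_
  by_cases h : d.1 = 0
  · rw [if_pos h, sub_self]
    exact zero_mem _
  · rw [if_neg h, sub_zero]
    rcases lt_trichotomy d.1 0 with hlt | heq | hgt
    · have := prHom_mem 𝒜 d b
      rw [hsuppA d hlt] at this
      simp only [AddSubgroup.mem_bot] at this
      rw [this]; exact zero_mem _
    · exact absurd heq h
    · exact AddSubgroup.subset_closure ⟨d.1, hgt, d.2, by
        have := prHom_mem 𝒜 d b; rwa [show ((d.1 : ℤ), d.2) = d from rfl]⟩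

lemma pi0_mul_of_pos (hsuppA : ∀ d : ℤ × G, d.1 < 0 → 𝒜 d = ⊥)
    {δ : ℤ × G} {a : A} (ha : a ∈ 𝒜 δ) (hδ : 0 < δ.1) (b : A) :
    pi0 𝒜 (a * b) = 0 := by
  induction b using DirectSum.Decomposition.inductionOn 𝒜 with
  | zero => rw [mul_zero, map_zero]
  | @homogeneous e m =>
      have hm : a * (m : A) ∈ 𝒜 (δ + e) := SetLike.mul_mem_graded ha m.2
      rw [pi0_of_mem 𝒜 hm]
      by_cases h : (δ + e).1 = 0
      · have he : e.1 < 0 := by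
          have h' : δ.1 + e.1 = 0 := h
          omega
        have hm0 : (m : A) = 0 :=
          (AddSubgroup.eq_bot_iff_forall _).mp (hsuppA e he) _ m.2
        rw [if_pos h, hm0, mul_zero]
      · rw [if_neg h]
  | add x y hx hy => rw [mul_add, map_add, hx, hy, add_zero]

lemma pi0_mul_of_zero {h : G} {a : A} (ha : a ∈ 𝒜 (0, h)) (b : A) :
    pi0 𝒜 (a * b) = a * pi0 𝒜 b := by
  induction b using DirectSum.Decomposition.inductionOn 𝒜 with
  | zero => rw [mul_zero, map_zero, mul_zero]
  | @homogeneous e m =>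
      have hm : a * (m : A) ∈ 𝒜 ((0, h) + e) := SetLike.mul_mem_graded ha m.2
      rw [pi0_of_mem 𝒜 hm, pi0_of_mem 𝒜 m.2]
      have : ((0, h) + e).1 = e.1 := by simp
      rw [this]
      by_cases he : e.1 = 0 <;> simp [he]
  | add x y hx hy => rw [mul_add, map_add, hx, hy, map_add, mul_add]

end Ring

section Nakayama

lemma grading_bounded (T : Set M) (hspan : Submodule.span A T = ⊤)
    (hsuppA : ∀ d : ℤ × G, d.1 < 0 → 𝒜 d = ⊥)
    (n₀ : ℤ) (hT : ∀ t ∈ T, ∃ d : ℤ × G, n₀ ≤ d.1 ∧ t ∈ ℳ d) :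
    ∀ d : ℤ × G, d.1 < n₀ → ℳ d = ⊥ := by
  classical
  set S : Submodule A M :=
    { carrier := {x : M | ∀ d : ℤ × G, d.1 < n₀ → prHom ℳ d x = 0}
      add_mem' := by
        intro x y hx hy d hd
        rw [map_add, hx d hd, hy d hd, add_zero]
      zero_mem' := by intro d _; rw [map_zero]
      smul_mem' := by
        intro a x hx d hd
        rw [prHom_smul_sum 𝒜 ℳ a x d]
        refine Finset.sum_eq_zero fun δ _ => ?_
        by_cases hneg : δ.1 < 0
        · have h0 : prHom 𝒜 δ a = 0 := by
            have := prHom_mem 𝒜 δ a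
            rw [hsuppA δ hneg] at this
            simpa using this
          rw [h0, zero_smul]
        · have : (-δ + d).1 < n₀ := by
            have h1 : (-δ + d).1 = -δ.1 + d.1 := rfl
            omega
          rw [hx _ this, smul_zero] } with hS
  have hTS : T ⊆ (S : Set M) := by
    intro t ht
    obtain ⟨d', hd'1, htd⟩ := hT t ht
    intro d hd
    exact prHom_of_mem_ne ℳ htd (by
      intro hc
      rw [hc] at hd'1
      omega)
  have hStop : S = ⊤ := by
    rw [eq_top_iff, ← hspan]
    exact Submodule.span_le.mpr hTS
  intro d hd
  rw [AddSubgroup.eq_bot_iff_forall]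
  intro x hx
  have hxS : x ∈ S := by rw [hStop]; trivial
  have := hxS d hd
  rwa [prHom_of_mem_same ℳ hx] at this

lemma nakayama_surj (hsuppA : ∀ d : ℤ × G, d.1 < 0 → 𝒜 d = ⊥)
    (n₀ : ℤ) (hb : ∀ d : ℤ × G, d.1 < n₀ → ℳ d = ⊥)
    (S : Submodule A M) (hpr : ∀ x ∈ S, ∀ d : ℤ × G, prHom ℳ d x ∈ S)
    (hcov : ∀ p : M, ∃ s ∈ S, p - s ∈ posSMulSubmoduleZG 𝒜 M) : S = ⊤ := by
  classical
  have key : ∀ j : ℕ, ∀ d : ℤ × G, d.1 < n₀ + j → ∀ x ∈ ℳ d, x ∈ S := by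
    intro j
    induction j with
    | zero =>
        intro d hd x hx
        have hbot := hb d (by simpa using hd)
        rw [hbot] at hx
        simp only [AddSubgroup.mem_bot] at hx
        rw [hx]; exact S.zero_mem
    | succ j IH =>
        intro d hd x hx
        obtain ⟨s, hs, hxs⟩ := hcov x
        have hJ : ∀ y ∈ posSMulSubmoduleZG 𝒜 M,
            ∀ d' : ℤ × G, d'.1 < n₀ + (j + 1 : ℕ) → prHom ℳ d' y ∈ S := by
          intro y hy
          induction hy using Submodule.span_induction with
          | mem y hy =>
              obtain ⟨n, hn, g, a, ha, m, rfl⟩ := hy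
              intro d' hd'
              rw [prHom_smul' 𝒜 ℳ ha]
              refine S.smul_mem _ (IH _ ?_ _ (prHom_mem ℳ _ m))
              have h1 : (-((n : ℤ), g) + d').1 = -n + d'.1 := rfl
              push_cast at hd' ⊢
              omega
          | zero => intro d' _; rw [map_zero]; exact S.zero_mem
          | add y z hy hz ihy ihz =>
              intro d' hd'
              rw [map_add]
              exact S.add_mem (ihy d' hd') (ihz d' hd')
          | smul b y hy ihy =>
              intro d' hd'
              rw [prHom_smul_sum 𝒜 ℳ b y d']
              refine Submodule.sum_mem _ fun δ _ => ?_
              by_cases hneg : δ.1 < 0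
              · have h0 : prHom 𝒜 δ b = 0 := by
                  have := prHom_mem 𝒜 δ b
                  rw [hsuppA δ hneg] at this
                  simpa using this
                rw [h0, zero_smul]; exact S.zero_mem
              · refine S.smul_mem _ (ihy _ ?_)
                have h1 : (-δ + d').1 = -δ.1 + d'.1 := rfl
                push_cast at hd' ⊢
                omega
        have hxd : x = prHom ℳ d s + prHom ℳ d (x - s) := by
          have h2 : prHom ℳ d x = prHom ℳ d s + prHom ℳ d (x - s) := by
            rw [← map_add]; congr 1; abel
          rw [prHom_of_mem_same ℳ hx] at h2
          exact h2
        rw [hxd]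
        exact S.add_mem (hpr s hs d) (hJ _ hxs d hd)
  rw [eq_top_iff]
  intro x _
  rw [← prHom_sum ℳ x]
  refine Submodule.sum_mem _ fun d _ => ?_
  refine key ((d.1 - n₀).toNat + 1) d ?_ _ (prHom_mem ℳ d x)
  have := Int.self_le_toNat (d.1 - n₀)
  push_cast
  omega

lemma nakayama_zero (hsuppA : ∀ d : ℤ × G, d.1 < 0 → 𝒜 d = ⊥)
    (n₀ : ℤ) (hb : ∀ d : ℤ × G, d.1 < n₀ → ℳ d = ⊥)
    (S : Submodule A M) (hpr : ∀ x ∈ S, ∀ d : ℤ × G, prHom ℳ d x ∈ S)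
    (hsub : ∀ x ∈ S, x ∈ Submodule.span A
      {y : M | ∃ n : ℤ, 0 < n ∧ ∃ g : G, ∃ a ∈ 𝒜 (n, g), ∃ k ∈ S, y = a • k}) :
    S = ⊥ := by
  classical
  have key : ∀ j : ℕ, ∀ d : ℤ × G, d.1 < n₀ + j → ∀ x ∈ ℳ d, x ∈ S → x = 0 := by
    intro j
    induction j with
    | zero =>
        intro d hd x hx _
        have hbot := hb d (by simpa using hd)
        rw [hbot] at hx
        simpa using hx
    | succ j IH =>
        intro d hd x hx hxS
        have hJ : ∀ y ∈ Submodule.span A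
            {y : M | ∃ n : ℤ, 0 < n ∧ ∃ g : G, ∃ a ∈ 𝒜 (n, g), ∃ k ∈ S, y = a • k},
            ∀ d' : ℤ × G, d'.1 < n₀ + (j + 1 : ℕ) → prHom ℳ d' y = 0 := by
          intro y hy
          induction hy using Submodule.span_induction with
          | mem y hy =>
              obtain ⟨n, hn, g, a, ha, k, hk, rfl⟩ := hy
              intro d' hd'
              rw [prHom_smul' 𝒜 ℳ ha]
              have hk0 : prHom ℳ (-((n : ℤ), g) + d') k = 0 := by
                refine IH _ ?_ _ (prHom_mem ℳ _ k) (hpr k hk _)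
                have h1 : (-((n : ℤ), g) + d').1 = -n + d'.1 := rfl
                push_cast at hd' ⊢
                omega
              rw [hk0, smul_zero]
          | zero => intro d' _; rw [map_zero]
          | add y z hy hz ihy ihz =>
              intro d' hd'
              rw [map_add, ihy d' hd', ihz d' hd', add_zero]
          | smul b y hy ihy =>
              intro d' hd'
              rw [prHom_smul_sum 𝒜 ℳ b y d']
              refine Finset.sum_eq_zero fun δ _ => ?_
              by_cases hneg : δ.1 < 0
              · have h0 : prHom 𝒜 δ b = 0 := by
                  have := prHom_mem 𝒜 δ b
                  rw [hsuppA δ hneg] at this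
                  simpa using this
                rw [h0, zero_smul]
              · rw [ihy _ ?_, smul_zero]
                have h1 : (-δ + d').1 = -δ.1 + d'.1 := rfl
                push_cast at hd' ⊢
                omega
        have := hJ x (hsub x hxS) d hd
        rwa [prHom_of_mem_same ℳ hx] at this
  rw [eq_bot_iff]
  intro x hxS
  simp only [Submodule.mem_bot]
  rw [← prHom_sum ℳ x]
  refine Finset.sum_eq_zero fun d _ => ?_
  refine key ((d.1 - n₀).toNat + 1) d ?_ _ (prHom_mem ℳ d x) (hpr x hxS d)
  have := Int.self_le_toNat (d.1 - n₀)
  push_cast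
  omega

lemma smul_closure_mem {c : A} (hc : c ∈ AddSubgroup.closure (posHomog 𝒜)) (m : M) :
    c • m ∈ posSMulSubmoduleZG 𝒜 M := by
  induction hc using AddSubgroup.closure_induction with
  | mem c hcm =>
      obtain ⟨n, hn, g, hcg⟩ := hcm
      exact Submodule.subset_span ⟨n, hn, g, c, hcg, m, rfl⟩
  | zero => rw [zero_smul]; exact Submodule.zero_mem _
  | add x y hx hy ihx ihy => rw [add_smul]; exact Submodule.add_mem _ ihx ihy
  | neg x hx ihx => rw [neg_smul]; exact Submodule.neg_mem _ ihx

lemma prHom_smul_closure_mem {c : A} (hc : c ∈ AddSubgroup.closure (posHomog 𝒜))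
    (m : M) (d : ℤ × G) :
    prHom ℳ d (c • m) ∈ posSMulSubmoduleZG 𝒜 M := by
  induction hc using AddSubgroup.closure_induction with
  | mem c hcm =>
      obtain ⟨n, hn, g, hcg⟩ := hcm
      rw [prHom_smul' 𝒜 ℳ hcg]
      exact Submodule.subset_span ⟨n, hn, g, c, hcg, _, rfl⟩
  | zero => rw [zero_smul, map_zero]; exact Submodule.zero_mem _
  | add x y hx hy ihx ihy =>
      rw [add_smul, map_add]; exact Submodule.add_mem _ ihx ihy
  | neg x hx ihx => rw [neg_smul, map_neg]; exact Submodule.neg_mem _ ihx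

end Nakayama

end Aux


/-- Let `G` be a group and `A` a `(ℤ × G)`-graded ring with support in `ℕ × G`, with
subring `A₍₀,₋₎ = ⊕_g A_{(0,g)}`. Every finitely generated `(ℤ × G)`-graded projective
`A`-module `P` is graded-isomorphic to `T(P) ⊗_{A₍₀,₋₎} A` where `T(P) = P/P·A₊` (the
tensor product being encoded by a graded base change `E` of `T(P)`); moreover
componentwise `P_{(ω,g)} ≅ ⊕_{κ≤ω, h} T(P)_{(κ,h)} ⊗ A_{(ω−κ, −h+g)}`, i.e. the
degree-`(ω,g)` component is generated by the images of `a • ι(t)` with `t` the class of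
an element of `P_{(κ,h)}`, `κ ≤ ω`, and `a ∈ A_{(ω−κ, g−h)}`. -/
theorem graded_projective_extended_ZG (A : Type u) [Ring A] (G : Type u) [AddGroup G]
    [DecidableEq G] (𝒜 : ℤ × G → AddSubgroup A) [GradedRing 𝒜]
    (hsupp : ∀ (n : ℤ) (g : G), n < 0 → 𝒜 (n, g) = ⊥)
    (A₀ : Subring A) (hA₀ : A₀.toAddSubgroup = ⨆ g : G, 𝒜 (0, g))
    (P : Type u) [AddCommGroup P] [Module A P] (ℳ : ℤ × G → AddSubgroup P)
    [DirectSum.Decomposition ℳ] [SetLike.GradedSMul 𝒜 ℳ]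
    [Module.Finite A P] [Module.Projective A P]
    (E : Type u) [AddCommGroup E] [Module A E] (ℰ : ℤ × G → AddSubgroup E)
    [DirectSum.Decomposition ℰ] [SetLike.GradedSMul 𝒜 ℰ]
    (ι : (P ⧸ posSMulSubmoduleZG 𝒜 P) →ₗ[A₀] E)
    (hι : ∀ (κ : ℤ) (h : G) (x : P), x ∈ ℳ (κ, h) →
      ι (Submodule.Quotient.mk x) ∈ ℰ (κ, h))
    (hE : IsBaseChangeAlong A A₀ (P ⧸ posSMulSubmoduleZG 𝒜 P) E ι) :
    ∃ e : E ≃ₗ[A] P,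
      (∀ d : ℤ × G, (ℰ d).map e.toLinearMap.toAddMonoidHom = ℳ d) ∧
      ∀ (ω : ℤ) (g : G), ℳ (ω, g) = AddSubgroup.closure
        {p : P | ∃ κ : ℤ, κ ≤ ω ∧ ∃ (h : G) (x : P) (a : A), x ∈ ℳ (κ, h) ∧
          a ∈ 𝒜 (ω - κ, g + -h) ∧ p = e (a • ι (Submodule.Quotient.mk x))} := by
  classical
  have hsuppA : ∀ d : ℤ × G, d.1 < 0 → 𝒜 d = ⊥ := fun d hd => hsupp d.1 d.2 hd
  obtain ⟨sP, hsP⟩ := Module.Projective.out (R := A) (P := P)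
  -- the degree-zero "coefficient projection" Λ
  set Λ : P →+ P := AddMonoidHom.mk' (fun p => (sP p).sum fun x c => pi0 𝒜 c • x)
    (by
      intro p q
      rw [map_add]
      exact Finsupp.sum_add_index' (fun x => by rw [map_zero, zero_smul])
        (fun x c1 c2 => by rw [map_add, add_smul])) with hΛdef
  have hΛapp : ∀ p : P, Λ p = (sP p).sum fun x c => pi0 𝒜 c • x := fun p => rfl
  have hΛpos : ∀ {δ : ℤ × G} {a : A}, a ∈ 𝒜 δ → 0 < δ.1 → ∀ p : P, Λ (a • p) = 0 := by
    intro δ a ha hδ p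
    rw [hΛapp, map_smul, Finsupp.sum_smul_index (fun x => by rw [map_zero, zero_smul]),
      Finsupp.sum]
    refine Finset.sum_eq_zero fun x hx => ?_
    rw [pi0_mul_of_pos 𝒜 hsuppA ha hδ, zero_smul]
  have hΛzero : ∀ {h : G} {a : A}, a ∈ 𝒜 (0, h) → ∀ p : P, Λ (a • p) = a • Λ p := by
    intro h a ha p
    rw [hΛapp, hΛapp, map_smul, Finsupp.sum_smul_index (fun x => by rw [map_zero, zero_smul]),
      Finsupp.smul_sum]
    refine Finsupp.sum_congr fun x _ => ?_
    rw [pi0_mul_of_zero 𝒜 ha, mul_smul]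
  -- the graded section τ
  set τ : P →+ P :=
    (DFinsupp.sumAddHom fun d : ℤ × G => (prHom ℳ d).comp (Λ.comp (ℳ d).subtype)).comp
      (DirectSum.decomposeAddEquiv ℳ).toAddMonoidHom with hτdef
  have hτ_of_mem : ∀ {d : ℤ × G} {p : P}, p ∈ ℳ d → τ p = prHom ℳ d (Λ p) := by
    intro d p hp
    have h0 : τ p =
        (DFinsupp.sumAddHom fun d : ℤ × G => (prHom ℳ d).comp (Λ.comp (ℳ d).subtype))
          (DirectSum.decompose ℳ p) := rfl
    have h1 : τ p =
        (DFinsupp.sumAddHom fun d : ℤ × G => (prHom ℳ d).comp (Λ.comp (ℳ d).subtype))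
          (DFinsupp.single d ⟨p, hp⟩) := by
      rw [h0, DirectSum.decompose_of_mem ℳ hp]; rfl
    rw [h1, DFinsupp.sumAddHom_single]
    rfl
  have hτgr : ∀ {d : ℤ × G} {p : P}, p ∈ ℳ d → τ p ∈ ℳ d := by
    intro d p hp
    rw [hτ_of_mem hp]
    exact prHom_mem ℳ d (Λ p)
  have hτpos : ∀ {δ : ℤ × G} {a : A}, a ∈ 𝒜 δ → 0 < δ.1 → ∀ p : P, τ (a • p) = 0 := by
    intro δ a ha hδ p
    induction p using DirectSum.Decomposition.inductionOn ℳ with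
    | zero => rw [smul_zero, map_zero]
    | @homogeneous e m =>
        have hm : a • (m : P) ∈ ℳ (δ + e) := SetLike.GradedSMul.smul_mem ha m.2
        rw [hτ_of_mem hm, hΛpos ha hδ, map_zero]
    | add x y hx hy => rw [smul_add, map_add, hx, hy, add_zero]
  have hτzero : ∀ {h : G} {a : A}, a ∈ 𝒜 (0, h) → ∀ p : P, τ (a • p) = a • τ p := by
    intro h a ha p
    induction p using DirectSum.Decomposition.inductionOn ℳ with
    | zero => rw [smul_zero, map_zero, smul_zero]
    | @homogeneous e m =>
        have hm : a • (m : P) ∈ ℳ ((0, h) + e) := SetLike.GradedSMul.smul_mem ha m.2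
        rw [hτ_of_mem hm, hτ_of_mem m.2, hΛzero ha, prHom_smul' 𝒜 ℳ ha,
          neg_add_cancel_left]
    | add x y hx hy => rw [smul_add, map_add, hx, hy, map_add, smul_add]
  have hτA₀ : ∀ a : A, a ∈ A₀ → ∀ p : P, τ (a • p) = a • τ p := by
    intro a haA p
    have ha : a ∈ ⨆ g : G, 𝒜 (0, g) := by
      rw [← hA₀]
      exact haA
    refine AddSubgroup.iSup_induction (C := fun a => τ (a • p) = a • τ p)
      (fun g : G => 𝒜 (0, g)) ha (fun g b hb => hτzero hb p) ?_ ?_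
    · show τ ((0 : A) • p) = (0 : A) • τ p
      rw [zero_smul, map_zero, zero_smul]
    · intro x y hx hy
      show τ ((x + y) • p) = (x + y) • τ p
      rw [add_smul, map_add, hx, hy, add_smul]
  have hτJ : ∀ y ∈ posSMulSubmoduleZG 𝒜 P, τ y = 0 := by
    intro y hy
    induction hy using Submodule.span_induction with
    | mem y hygen =>
        obtain ⟨n, hn, g, a, ha, m, rfl⟩ := hygen
        exact hτpos ha hn m
    | zero => rw [map_zero]
    | add y z hy hz ihy ihz => rw [map_add, ihy, ihz, add_zero]
    | smul b y hy ihy =>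
        conv_lhs => rw [← prHom_sum 𝒜 b, Finset.sum_smul, map_sum]
        refine Finset.sum_eq_zero fun δ _ => ?_
        rcases lt_trichotomy δ.1 0 with hlt | heq | hgt
        · have h0 : prHom 𝒜 δ b = 0 :=
            (AddSubgroup.eq_bot_iff_forall _).mp (hsuppA δ hlt) _ (prHom_mem 𝒜 δ b)
          rw [h0, zero_smul, map_zero]
        · have hmem : prHom 𝒜 δ b ∈ 𝒜 (0, δ.2) := by
            rw [show ((0 : ℤ), δ.2) = δ from Prod.ext heq.symm rfl]
            exact prHom_mem 𝒜 δ b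
          rw [hτzero hmem, ihy, smul_zero]
        · exact hτpos (prHom_mem 𝒜 δ b) hgt y
  have hτsub : ∀ p : P, p - τ p ∈ posSMulSubmoduleZG 𝒜 P := by
    intro p
    induction p using DirectSum.Decomposition.inductionOn ℳ with
    | zero => rw [map_zero, sub_zero]; exact Submodule.zero_mem _
    | @homogeneous e m =>
        have hrepr : (m : P) = (sP (m : P)).sum fun x c => c • x := by
          conv_lhs => rw [← hsP (m : P)]
          rw [Finsupp.linearCombination_apply]
          rfl
        have h1 : (m : P) = (sP (m : P)).sum fun x c => prHom ℳ e (c • x) := by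
          conv_lhs => rw [← prHom_of_mem_same ℳ m.2]
          conv_lhs => rw [hrepr, map_finsuppSum]
        have h2 : τ (m : P) = (sP (m : P)).sum fun x c => prHom ℳ e (pi0 𝒜 c • x) := by
          rw [hτ_of_mem m.2, hΛapp, map_finsuppSum]
        have h3 : (m : P) - τ (m : P) = (sP (m : P)).sum fun x c =>
            (prHom ℳ e (c • x) - prHom ℳ e (pi0 𝒜 c • x)) := by
          rw [Finsupp.sum_sub, ← h1, ← h2]
        rw [h3, Finsupp.sum]
        refine Submodule.sum_mem _ fun x _ => ?_
        rw [← map_sub, ← sub_smul]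
        exact prHom_smul_closure_mem 𝒜 ℳ (sub_pi0_mem 𝒜 hsuppA _) x e
    | add x y hx hy =>
        rw [map_add]
        have h3 : x + y - (τ x + τ y) = (x - τ x) + (y - τ y) := by abel
        rw [h3]
        exact Submodule.add_mem _ hx hy
  have hmkτ : ∀ p : P,
      (Submodule.Quotient.mk (τ p) : P ⧸ posSMulSubmoduleZG 𝒜 P) =
        Submodule.Quotient.mk p := by
    intro p
    rw [Submodule.Quotient.eq]
    have := hτsub p
    have h4 : τ p - p = -(p - τ p) := by abel
    rw [h4]
    exact Submodule.neg_mem _ this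
  have hwd : ∀ p p' : P,
      (Submodule.Quotient.mk p : P ⧸ posSMulSubmoduleZG 𝒜 P) = Submodule.Quotient.mk p' →
        τ p = τ p' := by
    intro p p' hpq
    have h1 : p - p' ∈ posSMulSubmoduleZG 𝒜 P := (Submodule.Quotient.eq _).mp hpq
    have h2 := hτJ _ h1
    rw [map_sub] at h2
    exact sub_eq_zero.mp h2
  let rep : (P ⧸ posSMulSubmoduleZG 𝒜 P) → P := fun q =>
    (Submodule.Quotient.mk_surjective (posSMulSubmoduleZG 𝒜 P) q).choose
  have hrep : ∀ q, (Submodule.Quotient.mk (rep q) : P ⧸ posSMulSubmoduleZG 𝒜 P) = q :=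
    fun q => (Submodule.Quotient.mk_surjective (posSMulSubmoduleZG 𝒜 P) q).choose_spec
  let sτ : (P ⧸ posSMulSubmoduleZG 𝒜 P) →ₗ[A₀] P :=
    { toFun := fun q => τ (rep q)
      map_add' := by
        intro q q'
        have h1 : (Submodule.Quotient.mk (rep (q + q')) : P ⧸ posSMulSubmoduleZG 𝒜 P) =
            Submodule.Quotient.mk (rep q + rep q') := by
          rw [Submodule.Quotient.mk_add, hrep, hrep, hrep]
        rw [hwd _ _ h1, map_add]
      map_smul' := by
        intro a₀ q
        have h1 : (Submodule.Quotient.mk (rep (a₀ • q)) : P ⧸ posSMulSubmoduleZG 𝒜 P) =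
            Submodule.Quotient.mk ((a₀ : A) • rep q) := by
          rw [hrep]
          rw [show (Submodule.Quotient.mk ((a₀ : A) • rep q) :
            P ⧸ posSMulSubmoduleZG 𝒜 P) = a₀ • Submodule.Quotient.mk (rep q) from rfl]
          rw [hrep]
        rw [hwd _ _ h1, hτA₀ (a₀ : A) a₀.2]
        rfl }
  have hsmk : ∀ p : P, sτ (Submodule.Quotient.mk p) = τ p :=
    fun p => hwd _ _ (hrep _)
  obtain ⟨F, hF, hFuniq⟩ := hE P sτ
  -- E is generated by the image of ι
  have span_top : Submodule.span A (Set.range ι) = ⊤ := by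
    set Sp := Submodule.span A (Set.range ι) with hSpdef
    obtain ⟨F₀, hF₀, huniq⟩ := hE (E ⧸ Sp) ((Sp.mkQ.restrictScalars A₀).comp ι)
    have e1 : Sp.mkQ = F₀ := huniq _ (fun q => rfl)
    have e2 : (0 : E →ₗ[A] E ⧸ Sp) = F₀ := by
      refine huniq _ (fun q => ?_)
      rw [LinearMap.zero_apply]
      have : ι q ∈ Sp := Submodule.subset_span ⟨q, rfl⟩
      exact ((Submodule.Quotient.mk_eq_zero _).mpr this).symm
    have e3 : Sp.mkQ = (0 : E →ₗ[A] E ⧸ Sp) := e1.trans e2.symm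
    rw [Submodule.eq_top_iff']
    intro x
    have : Sp.mkQ x = 0 := by rw [e3]; rfl
    rwa [Submodule.mkQ_apply, Submodule.Quotient.mk_eq_zero] at this
  -- bounded-below grading on P
  obtain ⟨SPf, hSPf⟩ := Module.Finite.fg_top (R := A) (M := P)
  set TP : Finset P := SPf.biUnion fun s =>
    (DirectSum.decompose ℳ s).support.image fun d => prHom ℳ d s with hTPdef
  have hTPspan : Submodule.span A (TP : Set P) = ⊤ := by
    rw [eq_top_iff, ← hSPf]
    refine Submodule.span_le.mpr fun s hs => ?_
    rw [← prHom_sum ℳ s]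
    refine Submodule.sum_mem _ fun d hd => Submodule.subset_span ?_
    exact Finset.mem_coe.mpr (Finset.mem_biUnion.mpr ⟨s, hs, Finset.mem_image.mpr ⟨d, hd, rfl⟩⟩)
  set N : ℕ := SPf.sup fun s => (DirectSum.decompose ℳ s).support.sup fun d => (-d.1).toNat
    with hNdef
  set n₀ : ℤ := -(N : ℤ) with hn₀def
  have hTPdeg : ∀ t ∈ (TP : Set P), ∃ d : ℤ × G, n₀ ≤ d.1 ∧ t ∈ ℳ d := by
    intro t ht
    obtain ⟨s, hs, hts⟩ := Finset.mem_biUnion.mp (Finset.mem_coe.mp ht)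
    obtain ⟨d, hd, rfl⟩ := Finset.mem_image.mp hts
    refine ⟨d, ?_, prHom_mem ℳ d s⟩
    have h1 : (-d.1).toNat ≤ N := le_trans
      (Finset.le_sup (f := fun d : ℤ × G => (-d.1).toNat) hd)
      (Finset.le_sup (f := fun s : P =>
        (DirectSum.decompose ℳ s).support.sup fun d : ℤ × G => (-d.1).toNat) hs)
    have h2 := Int.self_le_toNat (-d.1)
    rw [hn₀def]
    omega
  have hPbound : ∀ d : ℤ × G, d.1 < n₀ → ℳ d = ⊥ :=
    grading_bounded 𝒜 ℳ (TP : Set P) hTPspan hsuppA n₀ hTPdeg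
  -- bounded-below grading on E
  set TE : Set E := {y : E | ∃ (κ : ℤ) (h : G) (x : P), x ∈ ℳ (κ, h) ∧
    y = ι (Submodule.Quotient.mk x)} with hTEdef
  have hιmk_sum : ∀ p : P, ι (Submodule.Quotient.mk p) =
      ∑ d ∈ DFinsupp.support (DirectSum.decompose ℳ p),
        ι (Submodule.Quotient.mk (prHom ℳ d p)) := by
    intro p
    conv_lhs => rw [← prHom_sum ℳ p, ← Submodule.mkQ_apply, map_sum, map_sum]
    simp [Submodule.mkQ_apply]
  have hTEspan : Submodule.span A TE = ⊤ := by
    rw [eq_top_iff, ← span_top]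
    refine Submodule.span_le.mpr fun y hy => ?_
    obtain ⟨q, rfl⟩ := hy
    obtain ⟨p, rfl⟩ := Submodule.Quotient.mk_surjective _ q
    rw [hιmk_sum p]
    refine Submodule.sum_mem _ fun d _ => Submodule.subset_span ?_
    exact ⟨d.1, d.2, prHom ℳ d p, prHom_mem ℳ d p, rfl⟩
  have hTEdeg : ∀ t ∈ TE, ∃ d : ℤ × G, n₀ ≤ d.1 ∧ t ∈ ℰ d := by
    rintro t ⟨κ, h, x, hx, rfl⟩
    by_cases hκ : n₀ ≤ κ
    · exact ⟨(κ, h), hκ, hι κ h x hx⟩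
    · have hx0 : x = 0 :=
        (AddSubgroup.eq_bot_iff_forall _).mp (hPbound (κ, h) (by push_neg at hκ; exact hκ)) _ hx
      refine ⟨(n₀, h), le_refl _, ?_⟩
      rw [hx0]
      rw [show (Submodule.Quotient.mk (0 : P) : P ⧸ posSMulSubmoduleZG 𝒜 P) = 0 from rfl,
        map_zero]
      exact zero_mem _
  have hEbound : ∀ d : ℤ × G, d.1 < n₀ → ℰ d = ⊥ :=
    grading_bounded 𝒜 ℰ TE hTEspan hsuppA n₀ hTEdeg
  -- the grading of E is determined
  set Egen : (ℤ × G) → Set E := fun d => {y : E | ∃ (κ : ℤ) (h : G) (x : P) (a : A),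
    x ∈ ℳ (κ, h) ∧ a ∈ 𝒜 (d - (κ, h)) ∧ y = a • ι (Submodule.Quotient.mk x)} with hEgendef
  have hEgen_sub : ∀ d : ℤ × G, Egen d ⊆ (ℰ d : Set E) := by
    rintro d y ⟨κ, h, x, a, hx, ha, rfl⟩
    have h1 : a • ι (Submodule.Quotient.mk x) ∈ ℰ ((d - (κ, h)) + (κ, h)) :=
      SetLike.GradedSMul.smul_mem ha (hι κ h x hx)
    rwa [sub_add_cancel] at h1
  have hsmulEgen : ∀ {δ : ℤ × G} {a : A}, a ∈ 𝒜 δ → ∀ {d : ℤ × G} {y : E},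
      y ∈ AddSubgroup.closure (Egen d) →
      a • y ∈ AddSubgroup.closure (Egen (δ + d)) := by
    intro δ a ha d y hy
    induction hy using AddSubgroup.closure_induction with
    | mem y hygen =>
        obtain ⟨κ, h, x, b, hx, hb, rfl⟩ := hygen
        rw [← mul_smul]
        refine AddSubgroup.subset_closure ⟨κ, h, x, a * b, hx, ?_, rfl⟩
        have h1 : a * b ∈ 𝒜 (δ + (d - (κ, h))) := SetLike.mul_mem_graded ha hb
        rwa [show δ + (d - (κ, h)) = (δ + d) - (κ, h) from by
          rw [sub_eq_add_neg, sub_eq_add_neg, add_assoc]] at h1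
    | zero => rw [smul_zero]; exact zero_mem _
    | add x y hx hy ihx ihy => rw [smul_add]; exact add_mem ihx ihy
    | neg x hx ihx => rw [smul_neg]; exact neg_mem ihx
  have hEsubgen : ∀ (y : E) (d : ℤ × G), prHom ℰ d y ∈ AddSubgroup.closure (Egen d) := by
    intro y d
    have hy : y ∈ Submodule.span A (Set.range ι) := by rw [span_top]; trivial
    induction hy using Submodule.span_induction generalizing d with
    | mem y hygen =>
        obtain ⟨q, rfl⟩ := hygen
        obtain ⟨p, rfl⟩ := Submodule.Quotient.mk_surjective _ q
        rw [hιmk_sum p, map_sum]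
        refine sum_mem fun e _ => ?_
        have hmem : ι (Submodule.Quotient.mk (prHom ℳ e p)) ∈ ℰ e :=
          hι e.1 e.2 _ (prHom_mem ℳ e p)
        by_cases hed : e = d
        · subst hed
          rw [prHom_of_mem_same ℰ hmem]
          refine AddSubgroup.subset_closure ⟨e.1, e.2, prHom ℳ e p, 1,
            prHom_mem ℳ e p, ?_, (one_smul _ _).symm⟩
          rw [sub_self]
          exact SetLike.one_mem_graded 𝒜
        · rw [prHom_of_mem_ne ℰ hmem hed]
          exact zero_mem _
    | zero => rw [map_zero]; exact zero_mem _
    | add y z hy hz ihy ihz => rw [map_add]; exact add_mem (ihy d) (ihz d)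
    | smul a y hy ihy =>
        rw [prHom_smul_sum 𝒜 ℰ a y d]
        refine sum_mem fun δ _ => ?_
        have h1 := hsmulEgen (prHom_mem 𝒜 δ a) (ihy (-δ + d))
        rwa [add_neg_cancel_left] at h1
  have hEgen_eq : ∀ d : ℤ × G, ℰ d = AddSubgroup.closure (Egen d) := by
    intro d
    refine le_antisymm (fun y hy => ?_) ((AddSubgroup.closure_le _).mpr (hEgen_sub d))
    have := hEsubgen y d
    rwa [prHom_of_mem_same ℰ hy] at this
  -- F is graded
  have hFιmk : ∀ p : P, F (ι (Submodule.Quotient.mk p)) = τ p := by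
    intro p
    rw [hF]
    exact hsmk p
  have hFgr : ∀ (d : ℤ × G), ∀ y ∈ ℰ d, F y ∈ ℳ d := by
    intro d y hy
    rw [hEgen_eq d] at hy
    induction hy using AddSubgroup.closure_induction with
    | mem y hygen =>
        obtain ⟨κ, h, x, a, hx, ha, rfl⟩ := hygen
        rw [map_smul, hFιmk]
        have h1 : a • τ x ∈ ℳ ((d - (κ, h)) + (κ, h)) :=
          SetLike.GradedSMul.smul_mem ha (hτgr hx)
        rwa [sub_add_cancel] at h1
    | zero => rw [map_zero]; exact zero_mem _
    | add x y hx hy ihx ihy => rw [map_add]; exact add_mem ihx ihy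
    | neg x hx ihx => rw [map_neg]; exact neg_mem ihx
  have hFpr : ∀ (d : ℤ × G) (y : E), prHom ℳ d (F y) = F (prHom ℰ d y) := by
    intro d y
    induction y using DirectSum.Decomposition.inductionOn ℰ with
    | zero => rw [map_zero, map_zero, map_zero, map_zero]
    | @homogeneous e m =>
        have hFm : F (m : E) ∈ ℳ e := hFgr e _ m.2
        by_cases hed : e = d
        · subst hed
          rw [prHom_of_mem_same ℳ hFm, prHom_of_mem_same ℰ m.2]
        · rw [prHom_of_mem_ne ℳ hFm hed, prHom_of_mem_ne ℰ m.2 hed, map_zero]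
    | add x y hx hy => rw [map_add, map_add, map_add, map_add, hx, hy]
  -- surjectivity
  have hrangeF : LinearMap.range F = ⊤ := by
    refine nakayama_surj 𝒜 ℳ hsuppA n₀ hPbound _ ?_ ?_
    · rintro x ⟨y, rfl⟩ d
      exact ⟨prHom ℰ d y, (hFpr d y).symm⟩
    · intro p
      exact ⟨F (ι (Submodule.Quotient.mk p)), ⟨_, rfl⟩, by rw [hFιmk]; exact hτsub p⟩
  have hFsurj : Function.Surjective F := LinearMap.range_eq_top.mp hrangeF
  -- injectivity
  obtain ⟨σ, hσ⟩ := Module.projective_lifting_property F LinearMap.id hFsurj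
  have hσap : ∀ y : P, F (σ y) = y := fun y => by
    have := LinearMap.ext_iff.mp hσ y
    simpa using this
  set π : E →ₗ[A] E := LinearMap.id - σ ∘ₗ F with hπdef
  have hπker : ∀ x : E, F (π x) = 0 := by
    intro x
    rw [hπdef]
    simp only [LinearMap.sub_apply, LinearMap.id_apply, LinearMap.comp_apply, map_sub]
    rw [hσap]
    exact sub_self _
  have hπfix : ∀ x ∈ LinearMap.ker F, π x = x := by
    intro x hx
    rw [hπdef]
    simp only [LinearMap.sub_apply, LinearMap.id_apply, LinearMap.comp_apply]
    rw [LinearMap.mem_ker.mp hx, map_zero, sub_zero]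
  have hcoverE : ∀ x : E, ∃ q, x - ι q ∈ posSMulSubmoduleZG 𝒜 E := by
    set S₂ : Submodule A E :=
      { carrier := {x : E | ∃ q, x - ι q ∈ posSMulSubmoduleZG 𝒜 E}
        zero_mem' := ⟨0, by rw [map_zero, sub_zero]; exact Submodule.zero_mem _⟩
        add_mem' := by
          rintro x y ⟨q1, h1⟩ ⟨q2, h2⟩
          refine ⟨q1 + q2, ?_⟩
          rw [map_add]
          have h3 : x + y - (ι q1 + ι q2) = (x - ι q1) + (y - ι q2) := by abel
          rw [h3]
          exact Submodule.add_mem _ h1 h2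
        smul_mem' := by
          rintro a x ⟨q, hq⟩
          refine ⟨(⟨pi0 𝒜 a, pi0_mem 𝒜 A₀ hA₀ a⟩ : A₀) • q, ?_⟩
          rw [map_smul]
          rw [show ((⟨pi0 𝒜 a, pi0_mem 𝒜 A₀ hA₀ a⟩ : A₀) • ι q : E) = pi0 𝒜 a • ι q from rfl]
          have heq : a • x - pi0 𝒜 a • ι q = a • (x - ι q) + (a - pi0 𝒜 a) • ι q := by
            rw [smul_sub, sub_smul]
            abel
          rw [heq]
          exact Submodule.add_mem _ (Submodule.smul_mem _ a hq)
            (smul_closure_mem 𝒜 (sub_pi0_mem 𝒜 hsuppA a) (ι q)) } with hS₂def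
    have hS₂top : S₂ = ⊤ := by
      rw [eq_top_iff, ← span_top]
      refine Submodule.span_le.mpr fun y hy => ?_
      obtain ⟨q, rfl⟩ := hy
      exact ⟨q, by rw [sub_self]; exact Submodule.zero_mem _⟩
    intro x
    have : x ∈ S₂ := by rw [hS₂top]; trivial
    exact this
  have hFJ : ∀ y ∈ posSMulSubmoduleZG 𝒜 E, F y ∈ posSMulSubmoduleZG 𝒜 P := by
    intro y hy
    induction hy using Submodule.span_induction with
    | mem y hygen =>
        obtain ⟨n, hn, g, a, ha, m, rfl⟩ := hygen
        rw [map_smul]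
        exact Submodule.subset_span ⟨n, hn, g, a, ha, F m, rfl⟩
    | zero => rw [map_zero]; exact Submodule.zero_mem _
    | add y z hy hz ihy ihz => rw [map_add]; exact Submodule.add_mem _ ihy ihz
    | smul b y hy ihy => rw [map_smul]; exact Submodule.smul_mem _ b ihy
  have hker : LinearMap.ker F = ⊥ := by
    refine nakayama_zero 𝒜 ℰ hsuppA n₀ hEbound _ ?_ ?_
    · intro x hx d
      refine LinearMap.mem_ker.mpr ?_
      rw [← hFpr d x, LinearMap.mem_ker.mp hx, map_zero]
    · intro x hx
      obtain ⟨q, hq⟩ := hcoverE x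
      have hFx : F x = 0 := LinearMap.mem_ker.mp hx
      have h1 : F (x - ι q) = -(sτ q) := by
        rw [map_sub, hFx, hF q, zero_sub]
      have h2 : sτ q ∈ posSMulSubmoduleZG 𝒜 P := by
        have h3 := Submodule.neg_mem _ (hFJ _ hq)
        rw [h1, neg_neg] at h3
        exact h3
      have h3 : q = 0 := by
        have h4 : sτ q = τ (rep q) := rfl
        have h5 : (Submodule.Quotient.mk (τ (rep q)) : P ⧸ posSMulSubmoduleZG 𝒜 P) = 0 :=
          (Submodule.Quotient.mk_eq_zero _).mpr (h4 ▸ h2)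
        rw [hmkτ, hrep] at h5
        exact h5
      have hxJE : x ∈ posSMulSubmoduleZG 𝒜 E := by
        rw [h3, map_zero, sub_zero] at hq
        exact hq
      -- x = π x ∈ π '' JE ⊆ span of positive-degree smuls of kernel elements
      have h6 : x = π x := (hπfix x hx).symm
      rw [h6]
      have h7 : π x ∈ Submodule.map π (posSMulSubmoduleZG 𝒜 E) :=
        Submodule.mem_map_of_mem hxJE
      rw [posSMulSubmoduleZG, Submodule.map_span] at h7
      refine Submodule.span_le.mpr ?_ h7
      rintro z ⟨w, ⟨n, hn, g, a, ha, m, rfl⟩, rfl⟩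
      refine Submodule.subset_span ⟨n, hn, g, a, ha, π m, ?_, map_smul π a m⟩
      exact LinearMap.mem_ker.mpr (hπker m)
  have hFinj : Function.Injective F := LinearMap.ker_eq_bot.mp hker
  -- assemble
  let e : E ≃ₗ[A] P := LinearEquiv.ofBijective F ⟨hFinj, hFsurj⟩
  have he_apply : ∀ y : E, e y = F y := fun y => rfl
  have hmap : ∀ d : ℤ × G, (ℰ d).map e.toLinearMap.toAddMonoidHom = ℳ d := by
    intro d
    refine le_antisymm ?_ ?_
    · rintro p hp
      obtain ⟨y, hy, rfl⟩ := AddSubgroup.mem_map.mp hp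
      exact hFgr d y hy
    · intro p hp
      obtain ⟨x, rfl⟩ := hFsurj p
      refine AddSubgroup.mem_map.mpr ⟨x, ?_, rfl⟩
      have hcomp : ∀ d' : ℤ × G, d' ≠ d → prHom ℰ d' x = 0 := by
        intro d' hne
        have h1 : F (prHom ℰ d' x) = 0 := by
          rw [← hFpr d' x]
          exact prHom_of_mem_ne ℳ hp (fun hc => hne hc.symm)
        exact hFinj (h1.trans (map_zero F).symm)
      rw [← prHom_sum ℰ x]
      refine sum_mem fun d' _ => ?_
      by_cases hd' : d' = d
      · subst hd'
        exact prHom_mem ℰ d' x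
      · rw [hcomp d' hd']
        exact zero_mem _
  refine ⟨e, hmap, ?_⟩
  intro ω g
  rw [← hmap (ω, g), hEgen_eq (ω, g), AddMonoidHom.map_closure]
  refine le_antisymm ((AddSubgroup.closure_le _).mpr ?_) ((AddSubgroup.closure_le _).mpr ?_)
  · rintro z ⟨y, ⟨κ, h, x, a, hx, ha, rfl⟩, rfl⟩
    by_cases hκ : κ ≤ ω
    · refine AddSubgroup.subset_closure ⟨κ, hκ, h, x, a, hx, ?_, rfl⟩
      rwa [show ((ω, g) - (κ, h) : ℤ × G) = (ω - κ, g + -h) from by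
        rw [Prod.mk_sub_mk, sub_eq_add_neg g h]] at ha
    · have ha0 : a = 0 := by
        refine (AddSubgroup.eq_bot_iff_forall _).mp (hsuppA ((ω, g) - (κ, h)) ?_) _ ha
        have : ((ω, g) - (κ, h) : ℤ × G).1 = ω - κ := rfl
        rw [this]
        omega
      rw [ha0, zero_smul, map_zero]
      exact zero_mem _
  · rintro z ⟨κ, hκ, h, x, a, hx, ha, rfl⟩
    refine AddSubgroup.subset_closure ⟨a • ι (Submodule.Quotient.mk x),
      ⟨κ, h, x, a, hx, ?_, rfl⟩, rfl⟩
    rwa [show ((ω, g) - (κ, h) : ℤ × G) = (ω - κ, g + -h) from by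
      rw [Prod.mk_sub_mk, sub_eq_add_neg g h]]
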